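/- For each m ≥ 1, the ℝ-algebra of polynomials on ℝ² invariant under the cyclic group K_m generated by the rotation of angle 2π/m is generated by x² + y², p_m(x,y) = Re((x+iy)^m), and q_m(x,y) = Im((x+iy)^m). -/

import Mathlib

open MvPolynomial Real Matrix Complex

/-- The rotation of `ℝ²` by angle `θ`. -/
noncomputable def rotMat (θ : ℝ) : Matrix (Fin 2) (Fin 2) ℝ :=
  !![Real.cos θ, -Real.sin θ; Real.sin θ, Real.cos θ]

lemma rotMat_mulVec (θ : ℝ) (v : Fin 2 → ℝ) :
    (rotMat θ).mulVec v =
      ![Real.cos θ * v 0 - Real.sin θ * v 1, Real.sin θ * v 0 + Real.cos θ * v 1] := by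
  funext i
  fin_cases i <;>
    simp [rotMat, Matrix.mulVec, dotProduct, Fin.sum_univ_two] <;> ring

noncomputable def reP (A : MvPolynomial (Fin 2) ℂ) : MvPolynomial (Fin 2) ℝ :=
  ∑ d ∈ A.support, monomial d (A.coeff d).re

noncomputable def imP (A : MvPolynomial (Fin 2) ℂ) : MvPolynomial (Fin 2) ℝ :=
  ∑ d ∈ A.support, monomial d (A.coeff d).im

lemma coeff_reP (A : MvPolynomial (Fin 2) ℂ) (d : Fin 2 →₀ ℕ) :
    coeff d (reP A) = (A.coeff d).re := by
  rw [reP, coeff_sum]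
  simp only [coeff_monomial]
  rw [Finset.sum_ite_eq' A.support d fun e => (A.coeff e).re]
  by_cases h : d ∈ A.support
  · simp [h]
  · simp [h, notMem_support_iff.mp h]

lemma coeff_imP (A : MvPolynomial (Fin 2) ℂ) (d : Fin 2 →₀ ℕ) :
    coeff d (imP A) = (A.coeff d).im := by
  rw [imP, coeff_sum]
  simp only [coeff_monomial]
  rw [Finset.sum_ite_eq' A.support d fun e => (A.coeff e).im]
  by_cases h : d ∈ A.support
  · simp [h]
  · simp [h, notMem_support_iff.mp h]

/-- abbreviation for complexification -/
noncomputable abbrev Fc : MvPolynomial (Fin 2) ℝ →+* MvPolynomial (Fin 2) ℂ :=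
  map (algebraMap ℝ ℂ)

lemma reP_map (P : MvPolynomial (Fin 2) ℝ) : reP (Fc P) = P := by
  ext d; rw [coeff_reP, coeff_map]; simp

lemma imP_map (P : MvPolynomial (Fin 2) ℝ) : imP (Fc P) = 0 := by
  ext d; rw [coeff_imP, coeff_map]; simp

lemma reP_add (A B : MvPolynomial (Fin 2) ℂ) : reP (A + B) = reP A + reP B := by
  ext d; simp [coeff_reP, coeff_add]

lemma imP_add (A B : MvPolynomial (Fin 2) ℂ) : imP (A + B) = imP A + imP B := by
  ext d; simp [coeff_imP, coeff_add]

lemma reP_smul (c : ℂ) (A : MvPolynomial (Fin 2) ℂ) :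
    reP (c • A) = c.re • reP A - c.im • imP A := by
  ext d
  simp [coeff_reP, coeff_imP, coeff_smul, smul_eq_mul, Complex.mul_re, coeff_sub]

lemma imP_smul (c : ℂ) (A : MvPolynomial (Fin 2) ℂ) :
    imP (c • A) = c.re • imP A + c.im • reP A := by
  ext d
  simp [coeff_reP, coeff_imP, coeff_smul, smul_eq_mul, Complex.mul_im, coeff_add]

lemma reP_zero : reP 0 = 0 := by ext d; simp [coeff_reP]
lemma imP_zero : imP 0 = 0 := by ext d; simp [coeff_imP]

lemma eq_of_reP_imP (A B : MvPolynomial (Fin 2) ℂ) (h1 : reP A = reP B) (h2 : imP A = imP B) :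
    A = B := by
  ext d
  have e1 := congrArg (coeff d) h1
  have e2 := congrArg (coeff d) h2
  rw [coeff_reP, coeff_reP] at e1
  rw [coeff_imP, coeff_imP] at e2
  exact Complex.ext e1 e2

lemma coe_eval (P : MvPolynomial (Fin 2) ℝ) (v : Fin 2 → ℝ) :
    ((eval v P : ℝ) : ℂ) = eval (fun i => (v i : ℂ)) (Fc P) := by
  rw [eval_map]
  have := eval₂_comp_left (algebraMap ℝ ℂ) (RingHom.id ℝ) v P
  simp only [RingHom.comp_id] at this
  rw [show (fun i => ((v i : ℝ) : ℂ)) = ⇑(algebraMap ℝ ℂ) ∘ v from rfl, ← this]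
  rfl

lemma eval_reP (A : MvPolynomial (Fin 2) ℂ) (v : Fin 2 → ℝ) :
    eval (fun i => (v i : ℂ)) A = (eval v (reP A) : ℂ) + (eval v (imP A) : ℂ) * Complex.I := by
  have : A = Fc (reP A) + Complex.I • Fc (imP A) := by
    ext d
    simp only [coeff_add, coeff_smul, coeff_map, coeff_reP, coeff_imP, smul_eq_mul]
    simp [Complex.ext_iff]
  conv_lhs => rw [this]
  rw [map_add, smul_eq_C_mul, _root_.map_mul, eval_C, ← coe_eval, ← coe_eval]
  ring

/-- complex polynomials agreeing on real points are equal -/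
lemma cfunext {A B : MvPolynomial (Fin 2) ℂ}
    (h : ∀ v : Fin 2 → ℝ, eval (fun i => (v i : ℂ)) A = eval (fun i => (v i : ℂ)) B) :
    A = B := by
  have key : ∀ v : Fin 2 → ℝ, eval v (reP A) = eval v (reP B) ∧ eval v (imP A) = eval v (imP B) := by
    intro v
    have h2 := h v
    rw [eval_reP, eval_reP] at h2
    have hre := congrArg Complex.re h2
    have him := congrArg Complex.im h2
    simp at hre him
    exact ⟨hre, him⟩
  exact eq_of_reP_imP A B
    (MvPolynomial.funext fun v => (key v).1) (MvPolynomial.funext fun v => (key v).2)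

lemma descent {S : Set (MvPolynomial (Fin 2) ℝ)} {P : MvPolynomial (Fin 2) ℝ}
    (h : Fc P ∈ Algebra.adjoin ℂ (Fc '' S)) : P ∈ Algebra.adjoin ℝ S := by
  have h1 : Fc P ∈ Submodule.span ℂ ((Submonoid.closure (Fc '' S) : Submonoid _) : Set _) := by
    rw [← Algebra.adjoin_eq_span]; exact h
  have h2 : (Submonoid.closure (Fc '' S) : Set (MvPolynomial (Fin 2) ℂ)) =
      Fc '' (SetLike.coe (Submonoid.closure S)) := by
    rw [← MonoidHom.map_mclosure]; rfl
  rw [h2] at h1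
  set T : Set (MvPolynomial (Fin 2) ℝ) := SetLike.coe (Submonoid.closure S) with hT
  have key : ∀ x ∈ Submodule.span ℂ (Fc '' T),
      reP x ∈ Submodule.span ℝ T ∧ imP x ∈ Submodule.span ℝ T := by
    intro x hx
    refine Submodule.span_induction ?_ ?_ ?_ ?_ hx
    · rintro _ ⟨t, ht, rfl⟩
      exact ⟨by rw [reP_map]; exact Submodule.subset_span ht, by rw [imP_map]; exact Submodule.zero_mem _⟩
    · exact ⟨by rw [reP_zero]; exact Submodule.zero_mem _, by rw [imP_zero]; exact Submodule.zero_mem _⟩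
    · rintro a b _ _ ⟨ha1, ha2⟩ ⟨hb1, hb2⟩
      exact ⟨by rw [reP_add]; exact Submodule.add_mem _ ha1 hb1, by rw [imP_add]; exact Submodule.add_mem _ ha2 hb2⟩
    · rintro c a _ ⟨ha1, ha2⟩
      constructor
      · rw [reP_smul]
        exact Submodule.sub_mem _ (Submodule.smul_mem _ _ ha1) (Submodule.smul_mem _ _ ha2)
      · rw [imP_smul]
        exact Submodule.add_mem _ (Submodule.smul_mem _ _ ha2) (Submodule.smul_mem _ _ ha1)
  have := (key _ h1).1
  rw [reP_map] at this
  have : P ∈ Submodule.span ℝ (SetLike.coe (Submonoid.closure S)) := this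
  rw [← Algebra.adjoin_eq_span] at this
  exact this

lemma aeval_scale_monomial (c : Fin 2 → ℂ) (e : Fin 2 →₀ ℕ) (a : ℂ) :
    aeval (fun i => C (c i) * X i) (monomial e a) = monomial e (a * ∏ i, c i ^ e i) := by
  rw [aeval_monomial, monomial_eq, Finsupp.prod_pow, Finsupp.prod_pow]
  simp only [algebraMap_eq, _root_.map_mul, map_prod, map_pow, mul_pow, Finset.prod_mul_distrib]
  ring

lemma coeff_aeval_scale (c : Fin 2 → ℂ) (Q : MvPolynomial (Fin 2) ℂ) (d : Fin 2 →₀ ℕ) :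
    coeff d (aeval (fun i => C (c i) * X i) Q) = coeff d Q * ∏ i, c i ^ d i := by
  conv_lhs => rw [Q.as_sum, map_sum]
  simp only [aeval_scale_monomial]
  rw [coeff_sum]
  simp only [coeff_monomial]
  rw [Finset.sum_ite_eq' Q.support d]
  by_cases h : d ∈ Q.support
  · simp [h]
  · simp [h, notMem_support_iff.mp h]

lemma monomial_mem (m : ℕ) (d : Fin 2 →₀ ℕ) (a : ℂ) (hd : (m : ℤ) ∣ (d 0 : ℤ) - (d 1 : ℤ)) :
    monomial d a ∈
      Algebra.adjoin ℂ ({X 0 * X 1, X 0 ^ m, X 1 ^ m} : Set (MvPolynomial (Fin 2) ℂ)) := by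
  have hmono : monomial d a = C a * (X 0 ^ d 0 * X 1 ^ d 1) := by
    rw [monomial_eq, Finsupp.prod_pow, Fin.prod_univ_two]
  rw [hmono]
  have h01 : (X 0 * X 1 : MvPolynomial (Fin 2) ℂ) ∈
      Algebra.adjoin ℂ ({X 0 * X 1, X 0 ^ m, X 1 ^ m} : Set (MvPolynomial (Fin 2) ℂ)) :=
    Algebra.subset_adjoin (by simp)
  have h0 : (X 0 ^ m : MvPolynomial (Fin 2) ℂ) ∈
      Algebra.adjoin ℂ ({X 0 * X 1, X 0 ^ m, X 1 ^ m} : Set (MvPolynomial (Fin 2) ℂ)) :=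
    Algebra.subset_adjoin (by simp)
  have h1 : (X 1 ^ m : MvPolynomial (Fin 2) ℂ) ∈
      Algebra.adjoin ℂ ({X 0 * X 1, X 0 ^ m, X 1 ^ m} : Set (MvPolynomial (Fin 2) ℂ)) :=
    Algebra.subset_adjoin (by simp)
  refine Subalgebra.mul_mem _ (Subalgebra.algebraMap_mem _ a) ?_
  rcases le_total (d 1) (d 0) with h | h
  · have : (m : ℤ) ∣ ((d 0 - d 1 : ℕ) : ℤ) := by
      rwa [Nat.cast_sub h]
    obtain ⟨k, hk⟩ := Int.ofNat_dvd.mp (by exact_mod_cast this)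
    have hd0 : d 0 = d 1 + m * k := by omega
    have : (X 0 ^ d 0 * X 1 ^ d 1 : MvPolynomial (Fin 2) ℂ)
        = (X 0 * X 1) ^ d 1 * (X 0 ^ m) ^ k := by
      rw [hd0]; ring
    rw [this]
    exact Subalgebra.mul_mem _ (Subalgebra.pow_mem _ h01 _) (Subalgebra.pow_mem _ h0 _)
  · have : (m : ℤ) ∣ ((d 1 - d 0 : ℕ) : ℤ) := by
      rw [Nat.cast_sub h]; exact dvd_sub_comm.mp hd
    obtain ⟨k, hk⟩ := Int.ofNat_dvd.mp (by exact_mod_cast this)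
    have hd1 : d 1 = d 0 + m * k := by omega
    have : (X 0 ^ d 0 * X 1 ^ d 1 : MvPolynomial (Fin 2) ℂ)
        = (X 0 * X 1) ^ d 0 * (X 1 ^ m) ^ k := by
      rw [hd1]; ring
    rw [this]
    exact Subalgebra.mul_mem _ (Subalgebra.pow_mem _ h01 _) (Subalgebra.pow_mem _ h1 _)

lemma Fc_aeval (g : Fin 2 → MvPolynomial (Fin 2) ℝ) (P : MvPolynomial (Fin 2) ℝ) :
    Fc (aeval g P) = aeval (fun i => Fc (g i)) (Fc P) := by
  induction P using MvPolynomial.induction_on with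
  | C a => simp [aeval_C]
  | add r s hr hs => simp only [map_add, hr, hs]
  | mul_X r i hr => simp only [_root_.map_mul, aeval_X, map_X, hr]

set_option maxHeartbeats 2000000 in
/-- For `m ≥ 1`, a polynomial on `ℝ²` is invariant under the cyclic group `K_m`
generated by the rotation `σ_m` of angle `2π/m` if and only if it belongs to the
`ℝ`-subalgebra generated by `x² + y²`, `p_m = Re((x+iy)^m)` and `q_m = Im((x+iy)^m)`:
`ℝ[x,y]^{K_m} = ℝ[x² + y², p_m, q_m]`. -/
theorem stmt2 (m : ℕ) (hm : 1 ≤ m) (p q : MvPolynomial (Fin 2) ℝ)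
    (hp : ∀ v : Fin 2 → ℝ, eval v p = (((v 0 : ℂ) + (v 1 : ℂ) * Complex.I) ^ m).re)
    (hq : ∀ v : Fin 2 → ℝ, eval v q = (((v 0 : ℂ) + (v 1 : ℂ) * Complex.I) ^ m).im)
    (P : MvPolynomial (Fin 2) ℝ) :
    (∀ k : ℤ, ∀ v : Fin 2 → ℝ,
        eval ((rotMat (2 * π * k / m)).mulVec v) P = eval v P) ↔
      P ∈ Algebra.adjoin ℝ
        ({X 0 ^ 2 + X 1 ^ 2, p, q} : Set (MvPolynomial (Fin 2) ℝ)) := by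
  have hm0 : (m : ℝ) ≠ 0 := Nat.cast_ne_zero.mpr (by omega)
  constructor
  · intro h
    have hm0' : m ≠ 0 := by omega
    set θ : ℝ := 2 * π / m with hθ
    -- step 1: invariance for k = 1 as a polynomial identity over ℝ
    have hk1 : ∀ v : Fin 2 → ℝ, eval ((rotMat θ).mulVec v) P = eval v P := by
      intro v
      have h1 := h 1 v
      have e : 2 * π * ((1 : ℤ) : ℝ) / m = θ := by push_cast; rw [hθ]; ring
      rwa [e] at h1
    set g : Fin 2 → MvPolynomial (Fin 2) ℝ :=
      ![C (Real.cos θ) * X 0 - C (Real.sin θ) * X 1,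
        C (Real.sin θ) * X 0 + C (Real.cos θ) * X 1] with hg
    have hPinv : aeval g P = P := by
      apply MvPolynomial.funext
      intro v
      rw [map_aeval]
      have e1 : ((eval v).comp (algebraMap ℝ (MvPolynomial (Fin 2) ℝ))) = RingHom.id ℝ := by
        ext r; simp
      rw [e1]
      have e2 : (fun i => (eval v) (g i)) = (rotMat θ).mulVec v := by
        funext i
        rw [rotMat_mulVec]
        fin_cases i <;> simp [hg]
      rw [show eval₂Hom (RingHom.id ℝ) (fun i => (eval v) (g i)) P
          = eval (fun i => (eval v) (g i)) P from rfl, e2]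
      exact hk1 v
    -- step 2: complexify
    set Pc : MvPolynomial (Fin 2) ℂ := Fc P with hPcdef
    set gc : Fin 2 → MvPolynomial (Fin 2) ℂ :=
      ![C ((Real.cos θ : ℂ)) * X 0 - C ((Real.sin θ : ℂ)) * X 1,
        C ((Real.sin θ : ℂ)) * X 0 + C ((Real.cos θ : ℂ)) * X 1] with hgc
    have hPcinv : aeval gc Pc = Pc := by
      have e3 : Fc (aeval g P) = aeval gc Pc := by
        rw [Fc_aeval, hPcdef]
        have e5 : (fun i => Fc (g i)) = gc := by
          funext i
          fin_cases i <;> simp [hg, hgc]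
        rw [e5]
      rw [← e3, hPinv]
    -- step 3: change of variables
    set Φ : MvPolynomial (Fin 2) ℂ →ₐ[ℂ] MvPolynomial (Fin 2) ℂ :=
      aeval ![X 0 + C Complex.I * X 1, X 0 - C Complex.I * X 1] with hΦ
    set Ψ : MvPolynomial (Fin 2) ℂ →ₐ[ℂ] MvPolynomial (Fin 2) ℂ :=
      aeval ![C ((2 : ℂ)⁻¹) * (X 0 + X 1), C ((2 : ℂ)⁻¹) * C Complex.I * (X 1 - X 0)] with hΨ
    have ha : (C ((2 : ℂ)⁻¹) : MvPolynomial (Fin 2) ℂ) * 2 = 1 := by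
      rw [← map_ofNat C 2, ← C_mul]
      norm_num
    have hb : (C Complex.I : MvPolynomial (Fin 2) ℂ) * C Complex.I = -1 := by
      rw [← C_mul, Complex.I_mul_I]; simp
    have hΦΨ : ∀ R : MvPolynomial (Fin 2) ℂ, Φ (Ψ R) = R := by
      have hcomp : Φ.comp Ψ = AlgHom.id ℂ (MvPolynomial (Fin 2) ℂ) := by
        apply MvPolynomial.algHom_ext
        intro i
        fin_cases i <;>
          simp only [Fin.zero_eta, Fin.mk_one, Fin.isValue, hΦ, hΨ, AlgHom.comp_apply,
            AlgHom.id_apply, aeval_X, _root_.map_mul, map_add, map_sub, aeval_C, algebraMap_eq,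
            Matrix.cons_val_zero, Matrix.cons_val_one, Matrix.head_cons]
        · linear_combination (X 0 : MvPolynomial (Fin 2) ℂ) * ha
        · linear_combination (X 1 : MvPolynomial (Fin 2) ℂ) * ha
            - 2 * C ((2 : ℂ)⁻¹) * (X 1 : MvPolynomial (Fin 2) ℂ) * hb
      intro R
      have := DFunLike.congr_fun hcomp R
      simpa using this
    set Q : MvPolynomial (Fin 2) ℂ := Ψ Pc with hQdef
    -- step 4: the scaling identity
    set ζ : ℂ := (Real.cos θ : ℂ) + (Real.sin θ : ℂ) * Complex.I with hζdef
    set ζ' : ℂ := (Real.cos θ : ℂ) - (Real.sin θ : ℂ) * Complex.I with hζ'def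
    have hCζ : (C ζ : MvPolynomial (Fin 2) ℂ)
        = C ((Real.cos θ : ℂ)) + C ((Real.sin θ : ℂ)) * C Complex.I := by
      rw [hζdef, map_add, C_mul]
    have hCζ' : (C ζ' : MvPolynomial (Fin 2) ℂ)
        = C ((Real.cos θ : ℂ)) - C ((Real.sin θ : ℂ)) * C Complex.I := by
      rw [hζ'def, map_sub, C_mul]
    have hscale : aeval (fun i => C (![ζ, ζ'] i) * X i) Q = Q := by
      have hcomp2 : (aeval (fun i => C (![ζ, ζ'] i) * X i) :
            MvPolynomial (Fin 2) ℂ →ₐ[ℂ] MvPolynomial (Fin 2) ℂ).comp Ψ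
          = Ψ.comp (aeval gc) := by
        apply MvPolynomial.algHom_ext
        intro i
        fin_cases i <;>
          simp only [Fin.zero_eta, Fin.mk_one, Fin.isValue, hΨ, hgc, AlgHom.comp_apply, aeval_X,
            _root_.map_mul, map_add, map_sub, aeval_C, algebraMap_eq, Matrix.cons_val_zero,
            Matrix.cons_val_one, Matrix.head_cons]
        · linear_combination (C ((2 : ℂ)⁻¹) * X 0 : MvPolynomial (Fin 2) ℂ) * hCζ
            + (C ((2 : ℂ)⁻¹) * X 1 : MvPolynomial (Fin 2) ℂ) * hCζ'
        · linear_combination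
            (C ((2 : ℂ)⁻¹) * C Complex.I * X 1 : MvPolynomial (Fin 2) ℂ) * hCζ'
            - (C ((2 : ℂ)⁻¹) * C Complex.I * X 0 : MvPolynomial (Fin 2) ℂ) * hCζ
            - (C ((2 : ℂ)⁻¹) * C ((Real.sin θ : ℂ)) * (X 0 + X 1) :
                MvPolynomial (Fin 2) ℂ) * hb
      calc aeval (fun i => C (![ζ, ζ'] i) * X i) Q
          = ((aeval (fun i => C (![ζ, ζ'] i) * X i) :
              MvPolynomial (Fin 2) ℂ →ₐ[ℂ] MvPolynomial (Fin 2) ℂ).comp Ψ) Pc := by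
              rw [AlgHom.comp_apply, hQdef]
        _ = (Ψ.comp (aeval gc)) Pc := by rw [hcomp2]
        _ = Ψ (aeval gc Pc) := by rw [AlgHom.comp_apply]
        _ = Q := by rw [hPcinv, hQdef]
    -- step 5: properties of ζ
    have hcs : ((Real.cos θ : ℂ)) ^ 2 + ((Real.sin θ : ℂ)) ^ 2 = 1 := by
      have := Real.sin_sq_add_cos_sq θ
      exact_mod_cast (by linarith : Real.cos θ ^ 2 + Real.sin θ ^ 2 = (1 : ℝ))
    have hζζ' : ζ * ζ' = 1 := by
      rw [hζdef, hζ'def]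
      linear_combination hcs - ((Real.sin θ : ℂ)) ^ 2 * Complex.I_sq
    have hζ0 : ζ ≠ 0 := left_ne_zero_of_mul_eq_one hζζ'
    have hζ'inv : ζ⁻¹ = ζ' := inv_eq_of_mul_eq_one_right hζζ'
    have hprim : IsPrimitiveRoot ζ m := by
      have hexp : ζ = Complex.exp (2 * π * Complex.I / m) := by
        have e4 : (2 * π * Complex.I / m) = (θ : ℝ) * Complex.I := by
          rw [hθ]; push_cast; ring
        rw [e4, Complex.exp_mul_I, hζdef, Complex.ofReal_cos, Complex.ofReal_sin]
      rw [hexp]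
      exact Complex.isPrimitiveRoot_exp m hm0'
    -- step 6: divisibility of exponents
    have hdvd : ∀ d ∈ Q.support, (m : ℤ) ∣ (d 0 : ℤ) - (d 1 : ℤ) := by
      intro d hd
      have h1 := congrArg (coeff d) hscale
      rw [coeff_aeval_scale] at h1
      have hcoeff : coeff d Q ≠ 0 := mem_support_iff.mp hd
      have h2 : (∏ i, (![ζ, ζ'] i) ^ d i) = 1 := by
        exact mul_left_cancel₀ hcoeff (h1.trans (mul_one (coeff d Q)).symm)
      rw [Fin.prod_univ_two] at h2
      simp only [Matrix.cons_val_zero, Matrix.cons_val_one, Matrix.head_cons] at h2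
      have h3 : ζ ^ ((d 0 : ℤ) - (d 1 : ℤ)) = 1 := by
        rw [zpow_sub₀ hζ0, zpow_natCast, zpow_natCast, div_eq_mul_inv, ← inv_pow, hζ'inv]
        exact h2
      exact (hprim.zpow_eq_one_iff_dvd _).mp h3
    -- step 7: Q lies in the adjoin of zw, z^m, w^m
    have hQmem : Q ∈ Algebra.adjoin ℂ
        ({X 0 * X 1, X 0 ^ m, X 1 ^ m} : Set (MvPolynomial (Fin 2) ℂ)) := by
      nth_rewrite 1 [Q.as_sum]
      exact Subalgebra.sum_mem _ fun d hd => monomial_mem m d _ (hdvd d hd)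
    -- step 8: transport along Φ
    have hI2 : (C Complex.I : MvPolynomial (Fin 2) ℂ) ^ 2 = -1 := by
      rw [sq]; exact hb
    have hΦ1 : Φ (X 0 * X 1) = Fc (X 0 ^ 2 + X 1 ^ 2) := by
      simp only [hΦ, _root_.map_mul, aeval_X, Matrix.cons_val_zero, Matrix.cons_val_one,
        Matrix.head_cons, map_add, map_pow, map_X]
      linear_combination (-(X 1 : MvPolynomial (Fin 2) ℂ) ^ 2) * hI2
    have hΦ2 : Φ (X 0 ^ m) = Fc p + C Complex.I * Fc q := by
      apply cfunext
      intro v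
      have lhs : eval (fun i => ((v i : ℝ) : ℂ)) (Φ (X 0 ^ m))
          = ((v 0 : ℂ) + (v 1 : ℂ) * Complex.I) ^ m := by
        rw [hΦ, map_pow, aeval_X]
        simp only [map_pow, Matrix.cons_val_zero, eval_add, _root_.map_mul, eval_C, eval_X]
        ring
      have rhs : eval (fun i => ((v i : ℝ) : ℂ)) (Fc p + C Complex.I * Fc q)
          = ((eval v p : ℝ) : ℂ) + Complex.I * ((eval v q : ℝ) : ℂ) := by
        rw [map_add, _root_.map_mul, eval_C, ← coe_eval, ← coe_eval]
      rw [lhs, rhs, hp, hq, mul_comm Complex.I]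
      exact (Complex.re_add_im _).symm
    have hΦ3 : Φ (X 1 ^ m) = Fc p - C Complex.I * Fc q := by
      apply cfunext
      intro v
      have hconj : ∀ w : ℂ, (starRingEnd ℂ) w = (w.re : ℂ) - (w.im : ℂ) * Complex.I := by
        intro w; apply Complex.ext <;> simp
      have lhs : eval (fun i => ((v i : ℝ) : ℂ)) (Φ (X 1 ^ m))
          = ((v 0 : ℂ) - (v 1 : ℂ) * Complex.I) ^ m := by
        rw [hΦ, map_pow, aeval_X]
        simp only [map_pow, Matrix.cons_val_one, Matrix.head_cons, Matrix.cons_val_zero, eval_sub, _root_.map_mul, eval_C, eval_X]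
        ring
      have rhs : eval (fun i => ((v i : ℝ) : ℂ)) (Fc p - C Complex.I * Fc q)
          = ((eval v p : ℝ) : ℂ) - ((eval v q : ℝ) : ℂ) * Complex.I := by
        rw [map_sub, _root_.map_mul, eval_C, ← coe_eval, ← coe_eval]; ring
      have hc : ((v 0 : ℂ) - (v 1 : ℂ) * Complex.I)
          = (starRingEnd ℂ) ((v 0 : ℂ) + (v 1 : ℂ) * Complex.I) := by
        simp [map_add, _root_.map_mul, Complex.conj_ofReal, Complex.conj_I]
        ring
      rw [lhs, rhs, hp, hq, hc, ← map_pow, hconj]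
    -- final assembly
    have hsub : (⇑Φ '' ({X 0 * X 1, X 0 ^ m, X 1 ^ m} : Set (MvPolynomial (Fin 2) ℂ)))
        ⊆ ↑(Algebra.adjoin ℂ
            (⇑Fc '' ({X 0 ^ 2 + X 1 ^ 2, p, q} : Set (MvPolynomial (Fin 2) ℝ)))) := by
      rintro _ ⟨x, hx, rfl⟩
      simp only [Set.mem_insert_iff, Set.mem_singleton_iff] at hx
      rcases hx with rfl | rfl | rfl
      · rw [hΦ1]
        exact Algebra.subset_adjoin (Set.mem_image_of_mem _ (by simp : (X 0 ^ 2 + X 1 ^ 2 : MvPolynomial (Fin 2) ℝ) ∈ ({X 0 ^ 2 + X 1 ^ 2, p, q} : Set (MvPolynomial (Fin 2) ℝ))))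
      · rw [hΦ2]
        refine Subalgebra.add_mem _
          (Algebra.subset_adjoin (Set.mem_image_of_mem _ (by simp : p ∈ ({X 0 ^ 2 + X 1 ^ 2, p, q} : Set (MvPolynomial (Fin 2) ℝ))))) ?_
        rw [← smul_eq_C_mul]
        exact Subalgebra.smul_mem _
          (Algebra.subset_adjoin (Set.mem_image_of_mem _ (by simp : q ∈ ({X 0 ^ 2 + X 1 ^ 2, p, q} : Set (MvPolynomial (Fin 2) ℝ))))) _
      · rw [hΦ3]
        refine Subalgebra.sub_mem _
          (Algebra.subset_adjoin (Set.mem_image_of_mem _ (by simp : p ∈ ({X 0 ^ 2 + X 1 ^ 2, p, q} : Set (MvPolynomial (Fin 2) ℝ))))) ?_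
        rw [← smul_eq_C_mul]
        exact Subalgebra.smul_mem _
          (Algebra.subset_adjoin (Set.mem_image_of_mem _ (by simp : q ∈ ({X 0 ^ 2 + X 1 ^ 2, p, q} : Set (MvPolynomial (Fin 2) ℝ))))) _
    have hPc_mem : Pc ∈ Algebra.adjoin ℂ
        (⇑Fc '' ({X 0 ^ 2 + X 1 ^ 2, p, q} : Set (MvPolynomial (Fin 2) ℝ))) := by
      have h5 : Φ Q ∈ (Algebra.adjoin ℂ
          ({X 0 * X 1, X 0 ^ m, X 1 ^ m} : Set (MvPolynomial (Fin 2) ℂ))).map Φ :=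
        Subalgebra.mem_map.mpr ⟨Q, hQmem, rfl⟩
      rw [AlgHom.map_adjoin] at h5
      have h6 := Algebra.adjoin_le hsub h5
      rw [← hΦΨ Pc]
      exact h6
    exact descent hPc_mem
  · -- backward direction
    intro hP k v
    set θ : ℝ := 2 * π * k / m with hθ
    rw [rotMat_mulVec]
    have hrot : ∀ w : Fin 2 → ℝ,
        ((Real.cos θ * w 0 - Real.sin θ * w 1 : ℝ) : ℂ)
          + ((Real.sin θ * w 0 + Real.cos θ * w 1 : ℝ) : ℂ) * Complex.I
        = ((Real.cos θ : ℂ) + (Real.sin θ : ℂ) * Complex.I) * ((w 0 : ℂ) + (w 1 : ℂ) * Complex.I) := by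
      intro w
      simp only [Complex.ext_iff, Complex.add_re, Complex.add_im, Complex.mul_re,
        Complex.mul_im, Complex.I_re, Complex.I_im, Complex.ofReal_re, Complex.ofReal_im]
      constructor <;> ring
    have hexp : ((Real.cos θ : ℂ) + (Real.sin θ : ℂ) * Complex.I) ^ m = 1 := by
      have h1 : ((Real.cos θ : ℂ) + (Real.sin θ : ℂ) * Complex.I) = Complex.exp (θ * Complex.I) := by
        rw [Complex.exp_mul_I]
        simp [Complex.ofReal_cos, Complex.ofReal_sin]
      rw [h1, ← Complex.exp_nat_mul]
      have h2 : (m : ℂ) * (θ * Complex.I) = k * (2 * π * Complex.I) := by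
        have : (m : ℝ) * θ = k * (2 * π) := by
          rw [hθ]; field_simp
        calc (m : ℂ) * (θ * Complex.I) = ((m : ℝ) * θ : ℝ) * Complex.I := by push_cast; ring
          _ = (((k : ℝ) * (2 * π) : ℝ) : ℂ) * Complex.I := by rw [this]
          _ = k * (2 * π * Complex.I) := by push_cast; ring
      rw [h2, Complex.exp_int_mul_two_pi_mul_I]
    have hpow : ∀ w : Fin 2 → ℝ,
        (((Real.cos θ * w 0 - Real.sin θ * w 1 : ℝ) : ℂ)
          + ((Real.sin θ * w 0 + Real.cos θ * w 1 : ℝ) : ℂ) * Complex.I) ^ m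
        = ((w 0 : ℂ) + (w 1 : ℂ) * Complex.I) ^ m := by
      intro w
      rw [hrot, mul_pow, hexp, one_mul]
    refine Algebra.adjoin_induction ?_ ?_ ?_ ?_ hP
    · rintro x hx
      rcases hx with rfl | rfl | rfl
      · simp only [map_add, map_pow, eval_X]
        show (Real.cos θ * v 0 - Real.sin θ * v 1) ^ 2
            + (Real.sin θ * v 0 + Real.cos θ * v 1) ^ 2 = v 0 ^ 2 + v 1 ^ 2
        have := Real.sin_sq_add_cos_sq θ
        nlinarith [this]
      · rw [hp, hp]
        show ((((Real.cos θ * v 0 - Real.sin θ * v 1 : ℝ) : ℂ)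
            + ((Real.sin θ * v 0 + Real.cos θ * v 1 : ℝ) : ℂ) * Complex.I) ^ m).re = _
        rw [hpow]
      · rw [hq, hq]
        show ((((Real.cos θ * v 0 - Real.sin θ * v 1 : ℝ) : ℂ)
            + ((Real.sin θ * v 0 + Real.cos θ * v 1 : ℝ) : ℂ) * Complex.I) ^ m).im = _
        rw [hpow]
    · intro r; simp
    · intro x y _ _ hx hy; simp [map_add, hx, hy]
    · intro x y _ _ hx hy; simp [_root_.map_mul, hx, hy]
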